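/- Consider the signature with atoms {a, b} and rule labels {r1, r2, r3}, and the positive disjunctive program P = { r1 : a ∨ b ←, r2 : a ← b, r3 : b ← a }. Then P has exactly two causal stable models I and I', given by I(a) = r1·a, I(b) = (r1·a)·r3·b and I'(b) = r1·b, I'(a) = (r1·b)·r2·a; in particular Atoms(I) = Atoms(I') = {a, b}, which is the unique GL-stable model of P. -/

import Mathlib

/-!  Causal values (Cabalar–Fandinno, causal stable models for disjunctive programs).

Causal values are the equivalence classes of terms (built from labels in `Lb` by possibly
infinite products `∏`, possibly infinite sums `∑` and application `·`) under the axioms of a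
completely distributive complete lattice (meet `*` = `⊓`/`sInf`, join `+` = `⊔`/`sSup`,
`1` = `⊤` the empty product, `0` = `⊥` the empty sum) together with the axioms for
application listed in the paper.  We formalize "the algebra of causal values `V_Lb`" as a
causal algebra (a completely distributive complete lattice with the extra operations
satisfying the axioms) that is free/initial, i.e. a quotient of the term algebra by exactly
the equational theory generated by the axioms. -/

open scoped Classical

namespace Causal

/-- The extra operations of a causal algebra: application `·` and label constants. -/
class CausalOps (Lb : Type) (V : Type) where
  capp : V → V → V
  clabel : Lb → V

/-- Application `t · u`. -/
def capp (Lb : Type) {V : Type} [CausalOps Lb V] (t u : V) : V :=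
  CausalOps.capp (Lb := Lb) t u

/-- The value of a label. -/
def clabel (Lb V : Type) [CausalOps Lb V] (l : Lb) : V :=
  CausalOps.clabel l

/-- The causes `C_Lb`: values with a representative term without addition, i.e. the closure
of the labels under (possibly infinite, possibly empty) products and application. -/
inductive IsCause (Lb : Type) {V : Type} [CompletelyDistribLattice V] [CausalOps Lb V] : V → Prop
  | label (l : Lb) : IsCause Lb (clabel Lb V l)
  | inf (S : Set V) (h : ∀ v ∈ S, IsCause Lb v) : IsCause Lb (sInf S)
  | app (t u : V) (ht : IsCause Lb t) (hu : IsCause Lb u) : IsCause Lb (capp Lb t u)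

/-- The axioms of a causal algebra (Figure 1 of the paper), on top of a completely
distributive complete lattice.  Here `*` is `⊓`, `+` is `⊔`, `1 = ⊤`, `0 = ⊥`. -/
class CausalAlgebra (Lb : Type) (V : Type) [CompletelyDistribLattice V] [CausalOps Lb V] :
    Prop where
  capp_assoc : ∀ t u w : V, capp Lb t (capp Lb u w) = capp Lb (capp Lb t u) w
  absorb_sup : ∀ t u w : V, t ⊔ capp Lb (capp Lb u t) w = t
  absorb_inf : ∀ t u w : V, t ⊓ capp Lb (capp Lb u t) w = capp Lb (capp Lb u t) w
  top_capp : ∀ t : V, capp Lb ⊤ t = t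
  capp_top : ∀ t : V, capp Lb t ⊤ = t
  capp_bot : ∀ t : V, capp Lb t ⊥ = ⊥
  bot_capp : ∀ t : V, capp Lb ⊥ t = ⊥
  label_idem : ∀ l : Lb, capp Lb (clabel Lb V l) (clabel Lb V l) = clabel Lb V l
  capp_sSup : ∀ (t : V) (S : Set V), capp Lb t (sSup S) = ⨆ u ∈ S, capp Lb t u
  sSup_capp : ∀ (S : Set V) (t : V), capp Lb (sSup S) t = ⨆ u ∈ S, capp Lb u t
  cause_capp_capp : ∀ c d e : V, IsCause Lb c → IsCause Lb d → IsCause Lb e → d ≠ ⊤ →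
    capp Lb (capp Lb c d) e = capp Lb c d ⊓ capp Lb d e
  cause_capp_inf : ∀ c d e : V, IsCause Lb c → IsCause Lb d → IsCause Lb e →
    capp Lb c (d ⊓ e) = capp Lb c d ⊓ capp Lb c e
  cause_inf_capp : ∀ c d e : V, IsCause Lb c → IsCause Lb d → IsCause Lb e →
    capp Lb (c ⊓ d) e = capp Lb c e ⊓ capp Lb d e
  cause_capp_sInf : ∀ (c : V) (S : Set V), IsCause Lb c → (∀ d ∈ S, IsCause Lb d) →
    S.Nonempty → capp Lb c (sInf S) = ⨅ d ∈ S, capp Lb c d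
  cause_sInf_capp : ∀ (S : Set V) (e : V), (∀ d ∈ S, IsCause Lb d) → IsCause Lb e →
    S.Nonempty → capp Lb (sInf S) e = ⨅ d ∈ S, capp Lb d e

/-- Homomorphisms of causal algebras preserve sums, products, application and labels. -/
def IsCausalHom (Lb : Type) {V W : Type} [CompletelyDistribLattice V] [CausalOps Lb V]
    [CompletelyDistribLattice W] [CausalOps Lb W] (h : V → W) : Prop :=
  (∀ S : Set V, h (sSup S) = sSup (h '' S)) ∧
  (∀ S : Set V, h (sInf S) = sInf (h '' S)) ∧
  (∀ t u : V, h (capp Lb t u) = capp Lb (h t) (h u)) ∧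
  (∀ l : Lb, h (clabel Lb V l) = clabel Lb W l)

/-- `V` is (a copy of) the algebra `V_Lb` of causal values over the labels `Lb`:
the free (initial) causal algebra over `Lb`, i.e. the quotient of the term algebra by the
equational theory generated by the axioms. -/
class IsValueAlgebra (Lb : Type) (V : Type) [CompletelyDistribLattice V] [CausalOps Lb V] :
    Prop where
  alg : CausalAlgebra Lb V
  free : ∀ (W : Type) [CompletelyDistribLattice W] [CausalOps Lb W],
    CausalAlgebra Lb W → ∃! h : V → W, IsCausalHom Lb h

/-! ### Labelled logic programs over a signature `⟨At, Lb⟩` with `At ⊆ Lb`. -/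

/-- A labelled rule
`r : A₁ ∨ … ∨ A_m ∨ not A_{m+1} ∨ … ∨ not A_n ← B₁, …, B_k, not B_{k+1}, …, not B_l`
with all head/body atoms in `At`. -/
structure LRule (Lb : Type) (At : Set Lb) where
  lbl : Lb
  hpos : Finset Lb
  hneg : Finset Lb
  bpos : Finset Lb
  bneg : Finset Lb
  hpos_sub : ∀ a ∈ hpos, a ∈ At
  hneg_sub : ∀ a ∈ hneg, a ∈ At
  bpos_sub : ∀ a ∈ bpos, a ∈ At
  bneg_sub : ∀ a ∈ bneg, a ∈ At

variable {Lb V : Type} {At : Set Lb}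

/-- The positive head, as a set of atoms. -/
def LRule.hposA (r : LRule Lb At) : Set ↥At := {a | (a : Lb) ∈ r.hpos}
/-- The negative head, as a set of atoms. -/
def LRule.hnegA (r : LRule Lb At) : Set ↥At := {a | (a : Lb) ∈ r.hneg}
/-- The positive body, as a set of atoms. -/
def LRule.bposA (r : LRule Lb At) : Set ↥At := {a | (a : Lb) ∈ r.bpos}
/-- The negative body, as a set of atoms. -/
def LRule.bnegA (r : LRule Lb At) : Set ↥At := {a | (a : Lb) ∈ r.bneg}

/-- A rule is positive iff it contains no negative literals. -/
def LRule.isPositive (r : LRule Lb At) : Prop := r.hneg = ∅ ∧ r.bneg = ∅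

/-- A program is positive iff all its rules are. -/
def PositiveProg (P : Set (LRule Lb At)) : Prop := ∀ r ∈ P, r.isPositive

section Sem

variable [CompletelyDistribLattice V] [CausalOps Lb V]

/-- The value `I(not A)` of a negative literal: `1` if `I(A) = 0` and `0` otherwise. -/
noncomputable def nval (v : V) : V := if v = ⊥ then ⊤ else ⊥

/-- The value of the body of a rule under an interpretation `I : At → V_Lb`:
`I(B₁) * … * I(B_k) * I(not B_{k+1}) * … * I(not B_l)`. -/
noncomputable def bodyVal (I : ↥At → V) (r : LRule Lb At) : V :=
  (⨅ a ∈ r.bposA, I a) ⊓ (⨅ a ∈ r.bnegA, nval (I a))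

/-- `I` satisfies a rule `r` iff `(body value) · r_lbl · A_j ≤ I(L_j)` for some head literal
`L_j` with atom `A_j`. -/
noncomputable def Satisfies (I : ↥At → V) (r : LRule Lb At) : Prop :=
  (∃ a ∈ r.hposA,
      capp Lb (capp Lb (bodyVal I r) (clabel Lb V r.lbl)) (clabel Lb V (a : Lb)) ≤ I a) ∨
  (∃ a ∈ r.hnegA,
      capp Lb (capp Lb (bodyVal I r) (clabel Lb V r.lbl)) (clabel Lb V (a : Lb)) ≤ nval (I a))

/-- `I ⊨ P`. -/
noncomputable def Models (I : ↥At → V) (P : Set (LRule Lb At)) : Prop := ∀ r ∈ P, Satisfies I r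

/-- `I` is standard (two-valued) iff it maps each atom to `{0, 1}`. -/
def IsStandard (I : ↥At → V) : Prop := ∀ a, I a = ⊥ ∨ I a = ⊤

/-- `Atoms(I) = { A ∈ At | I(A) ≠ 0 }`. -/
def AtomsOf (I : ↥At → V) : Set ↥At := {a | I a ≠ ⊥}

/-- The standard interpretation `I^st` associated to `I`. -/
noncomputable def Ist (I : ↥At → V) : ↥At → V := fun a => if I a = ⊥ then ⊥ else ⊤

/-- `I ≤ J` iff `I(A) ≤ J(A)` for every atom `A`. -/
def ile (I J : ↥At → V) : Prop := ∀ a, I a ≤ J a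

/-- `I ≼ J` iff `I ≤ J` or `Atoms(I) ⊊ Atoms(J)`. -/
def iwle (I J : ↥At → V) : Prop := ile I J ∨ AtomsOf I ⊂ AtomsOf J

/-- `I` is a causal stable model of a positive program `P` iff it is a `≼`-minimal
model of `P`. -/
noncomputable def CausalStablePos (P : Set (LRule Lb At)) (I : ↥At → V) : Prop :=
  Models I P ∧ ∀ J : ↥At → V, Models J P → iwle J I → J = I

/-- `I` is a standard stable model of a positive program `P` iff it is a `≼`-minimal
standard model of `P`. -/
noncomputable def StdStablePos (P : Set (LRule Lb At)) (I : ↥At → V) : Prop :=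
  IsStandard I ∧ Models I P ∧
    ∀ J : ↥At → V, IsStandard J → Models J P → iwle J I → J = I

end Sem

/-- `S ⊆ At` is closed under `P`. -/
def ClosedUnder (P : Set (LRule Lb At)) (S : Set ↥At) : Prop :=
  ∀ r ∈ P, r.bposA ∪ r.hnegA ⊆ S → (∀ a ∈ r.bnegA, a ∉ S) → ∃ a ∈ r.hposA, a ∈ S

/-- The result of deleting all negative literals of a rule. -/
def LRule.strip (r : LRule Lb At) : LRule Lb At :=
  ⟨r.lbl, r.hpos, ∅, r.bpos, ∅, r.hpos_sub,
    fun a ha => absurd ha (Finset.notMem_empty a),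
    r.bpos_sub, fun a ha => absurd ha (Finset.notMem_empty a)⟩

/-- The GL-reduct `P^S` of `P` w.r.t. a set of atoms `S`. -/
def glReduct (P : Set (LRule Lb At)) (S : Set ↥At) : Set (LRule Lb At) :=
  { r' | ∃ r ∈ P, (∀ a ∈ r.bnegA, a ∉ S) ∧ (∀ a ∈ r.hnegA, a ∈ S) ∧ r' = r.strip }

/-- `S` is a GL-stable model of `P` iff `S` is `⊆`-minimal among the sets closed under the
positive program `P^S`. -/
def GLStable (P : Set (LRule Lb At)) (S : Set ↥At) : Prop :=
  ClosedUnder (glReduct P S) S ∧ ∀ S' ⊆ S, ClosedUnder (glReduct P S) S' → S' = S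

section Sem2

variable [CompletelyDistribLattice V] [CausalOps Lb V]

/-- The causal reduct `P^I` of `P` w.r.t. an interpretation `I`. -/
def causalReduct (P : Set (LRule Lb At)) (I : ↥At → V) : Set (LRule Lb At) :=
  { r' | ∃ r ∈ P, (∀ a ∈ r.bnegA, I a = ⊥) ∧ (∀ a ∈ r.hnegA, I a ≠ ⊥) ∧ r' = r.strip }

/-- `I` is a causal stable model of `P` iff `I` is a causal stable model of the positive
program `P^I`. -/
noncomputable def CausalStable (P : Set (LRule Lb At)) (I : ↥At → V) : Prop :=
  CausalStablePos (causalReduct P I) I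

/-- A standard interpretation `J` is a standard stable model of `P` iff `J` is a standard
stable model of the positive program `P^J`. -/
noncomputable def StdStable (P : Set (LRule Lb At)) (I : ↥At → V) : Prop :=
  StdStablePos (causalReduct P I) I

end Sem2

end Causal

namespace Causal

/-- The labels of program 7: the atoms `a`, `b` and the rule labels `r1`, `r2`, `r3`. -/
inductive L12 : Type
  | a | b | r1 | r2 | r3
deriving DecidableEq

/-- The atoms of the signature: `At = {a, b}`. -/
def At12 : Set L12 := {L12.a, L12.b}

/-- The atom `a`. -/
def atomA : ↥At12 := ⟨L12.a, Or.inl rfl⟩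
/-- The atom `b`. -/
def atomB : ↥At12 := ⟨L12.b, Or.inr rfl⟩

private lemma memAt : ∀ x ∈ ({L12.a, L12.b} : Finset L12), x ∈ At12 := by
  intro x hx
  rcases Finset.mem_insert.mp hx with h | h
  · exact Or.inl h
  · exact Or.inr (Finset.mem_singleton.mp h)

private lemma memA : ∀ x ∈ ({L12.a} : Finset L12), x ∈ At12 := by
  intro x hx; exact Or.inl (Finset.mem_singleton.mp hx)

private lemma memB : ∀ x ∈ ({L12.b} : Finset L12), x ∈ At12 := by
  intro x hx; exact Or.inr (Finset.mem_singleton.mp hx)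

private lemma memE : ∀ x ∈ (∅ : Finset L12), x ∈ At12 := by
  intro x hx; exact absurd hx (Finset.notMem_empty x)

/-- `r1 : a ∨ b ←`. -/
def rule1 : LRule L12 At12 := ⟨L12.r1, {L12.a, L12.b}, ∅, ∅, ∅, memAt, memE, memE, memE⟩
/-- `r2 : a ← b`. -/
def rule2 : LRule L12 At12 := ⟨L12.r2, {L12.a}, ∅, {L12.b}, ∅, memA, memE, memB, memE⟩
/-- `r3 : b ← a`. -/
def rule3 : LRule L12 At12 := ⟨L12.r3, {L12.b}, ∅, {L12.a}, ∅, memB, memE, memA, memE⟩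

/-- The positive disjunctive program `P = {r1 : a ∨ b ←, r2 : a ← b, r3 : b ← a}`. -/
def P12 : Set (LRule L12 At12) := {rule1, rule2, rule3}

section
variable (V : Type) [CompletelyDistribLattice V] [CausalOps L12 V]

/-- The first causal stable model: `I(a) = r1·a` and `I(b) = (r1·a)·r3·b`. -/
def assign1 (I : ↥At12 → V) : Prop :=
  I atomA = capp L12 (clabel L12 V L12.r1) (clabel L12 V L12.a) ∧
  I atomB = capp L12 (capp L12 (capp L12 (clabel L12 V L12.r1) (clabel L12 V L12.a))
      (clabel L12 V L12.r3)) (clabel L12 V L12.b)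

/-- The second causal stable model: `I'(b) = r1·b` and `I'(a) = (r1·b)·r2·a`. -/
def assign2 (I : ↥At12 → V) : Prop :=
  I atomB = capp L12 (clabel L12 V L12.r1) (clabel L12 V L12.b) ∧
  I atomA = capp L12 (capp L12 (capp L12 (clabel L12 V L12.r1) (clabel L12 V L12.b))
      (clabel L12 V L12.r2)) (clabel L12 V L12.a)

end

/-! ### Auxiliary material for the proof -/

section AuxW
open OrderDual

/-- The concrete causal algebra on the dual powerset of `Lb`, with `capp = union`. -/
abbrev WSet (Lb : Type) : Type := (Set Lb)ᵒᵈ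

noncomputable instance (Lb : Type) : CausalOps Lb (WSet Lb) :=
  ⟨fun t u => toDual (ofDual t ∪ ofDual u), fun l => toDual {l}⟩

lemma wcapp {Lb : Type} (t u : WSet Lb) : capp Lb t u = toDual (ofDual t ∪ ofDual u) := rfl
lemma wlabel {Lb : Type} (l : Lb) : clabel Lb (WSet Lb) l = toDual {l} := rfl
lemma wbot {Lb : Type} : (⊥ : WSet Lb) = toDual (Set.univ) := rfl
lemma wtop {Lb : Type} : (⊤ : WSet Lb) = toDual (∅ : Set Lb) := rfl

instance wAlg (Lb : Type) : CausalAlgebra Lb (WSet Lb) where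
  capp_assoc t u w := by
    apply ofDual.injective; simp [wcapp, Set.union_assoc]
  absorb_sup t u w := by
    apply ofDual.injective
    simp [wcapp, ofDual_sup]
    intro x hx; simp [hx]
  absorb_inf t u w := by
    apply ofDual.injective
    simp [wcapp, ofDual_inf]
    intro x hx; simp [hx]
  top_capp t := by apply ofDual.injective; simp [wcapp, wtop]
  capp_top t := by apply ofDual.injective; simp [wcapp, wtop]
  capp_bot t := by apply ofDual.injective; simp [wcapp, wbot]
  bot_capp t := by apply ofDual.injective; simp [wcapp, wbot]
  label_idem l := by apply ofDual.injective; simp [wcapp, wlabel]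
  capp_sSup t S := by
    apply ofDual.injective
    rw [ofDual_iSup]
    simp only [ofDual_iSup, wcapp, ofDual_toDual, ofDual_sSup]
    ext x
    simp [Set.sInf_eq_sInter, Set.mem_sInter]
    constructor
    · rintro (h | h) u hu
      · exact Or.inl h
      · exact Or.inr (h (ofDual u) hu)
    · intro h
      by_cases hx : x ∈ ofDual t
      · exact Or.inl hx
      · refine Or.inr fun s hs => ?_
        rcases h (toDual s) hs with h' | h'
        · exact absurd h' hx
        · exact h'
  sSup_capp S t := by
    apply ofDual.injective
    rw [ofDual_iSup]
    simp only [ofDual_iSup, wcapp, ofDual_toDual, ofDual_sSup]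
    ext x
    simp [Set.sInf_eq_sInter, Set.mem_sInter]
    constructor
    · rintro (h | h) u hu
      · exact Or.inl (h (ofDual u) hu)
      · exact Or.inr h
    · intro h
      by_cases hx : x ∈ ofDual t
      · exact Or.inr hx
      · refine Or.inl fun s hs => ?_
        rcases h (toDual s) hs with h' | h'
        · exact h'
        · exact absurd h' hx
  cause_capp_capp c d e _ _ _ _ := by
    apply ofDual.injective
    simp [wcapp, ofDual_inf]
    ext x; simp; tauto
  cause_capp_inf c d e _ _ _ := by
    apply ofDual.injective
    simp [wcapp, ofDual_inf]
    ext x; simp; tauto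
  cause_inf_capp c d e _ _ _ := by
    apply ofDual.injective
    simp [wcapp, ofDual_inf]
    ext x; simp; tauto
  cause_capp_sInf c S _ _ hS := by
    apply ofDual.injective
    rw [ofDual_iInf]
    simp only [ofDual_iInf, wcapp, ofDual_toDual, ofDual_sInf]
    obtain ⟨d0, hd0⟩ := hS
    ext x
    simp [Set.sSup_eq_sUnion, Set.mem_sUnion]
    constructor
    · rintro (h | h)
      · exact ⟨d0, hd0, Or.inl h⟩
      · obtain ⟨s, hs, hx⟩ := h
        exact ⟨toDual s, hs, Or.inr hx⟩
    · rintro ⟨u, hu, h | h⟩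
      · exact Or.inl h
      · exact Or.inr ⟨ofDual u, hu, h⟩
  cause_sInf_capp S e _ _ hS := by
    apply ofDual.injective
    rw [ofDual_iInf]
    simp only [ofDual_iInf, wcapp, ofDual_toDual, ofDual_sInf]
    obtain ⟨d0, hd0⟩ := hS
    ext x
    simp [Set.sSup_eq_sUnion, Set.mem_sUnion]
    constructor
    · rintro (h | h)
      · obtain ⟨s, hs, hx⟩ := h
        exact ⟨toDual s, hs, Or.inl hx⟩
      · exact ⟨d0, hd0, Or.inr h⟩
    · rintro ⟨u, hu, h | h⟩
      · exact Or.inl ⟨ofDual u, hu, h⟩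
      · exact Or.inr h

end AuxW

instance instCAofVA (Lb V : Type) [CompletelyDistribLattice V] [CausalOps Lb V]
    [IsValueAlgebra Lb V] : CausalAlgebra Lb V := IsValueAlgebra.alg

section GenLemmas

variable {Lb V : Type} [CompletelyDistribLattice V] [CausalOps Lb V] [CausalAlgebra Lb V]

lemma capp_le_left (t u : V) : capp Lb t u ≤ t := by
  have h := CausalAlgebra.absorb_sup (Lb := Lb) t ⊤ u
  rw [CausalAlgebra.top_capp] at h
  exact sup_eq_left.mp h

lemma capp_le_right (t u : V) : capp Lb t u ≤ u := by
  have h := CausalAlgebra.absorb_sup (Lb := Lb) u t ⊤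
  rw [CausalAlgebra.capp_top] at h
  exact sup_eq_left.mp h

lemma capp_mono_left {t t' : V} (h : t ≤ t') (u : V) : capp Lb t u ≤ capp Lb t' u := by
  have hs := CausalAlgebra.sSup_capp (Lb := Lb) ({t, t'} : Set V) u
  rw [sSup_pair, sup_eq_right.mpr h, iSup_pair] at hs
  exact le_sup_left.trans hs.ge

end GenLemmas
section VDefs

variable (V : Type) [CompletelyDistribLattice V] [CausalOps L12 V]

/-- `r1·a`. -/
noncomputable def vra : V := capp L12 (clabel L12 V L12.r1) (clabel L12 V L12.a)
/-- `r1·b`. -/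
noncomputable def vrb : V := capp L12 (clabel L12 V L12.r1) (clabel L12 V L12.b)
/-- `(r1·a)·r3·b`. -/
noncomputable def w1 : V := capp L12 (capp L12 (vra V) (clabel L12 V L12.r3)) (clabel L12 V L12.b)
/-- `(r1·b)·r2·a`. -/
noncomputable def w2 : V := capp L12 (capp L12 (vrb V) (clabel L12 V L12.r2)) (clabel L12 V L12.a)

lemma assign1_iff (I : ↥At12 → V) : assign1 V I ↔ (I atomA = vra V ∧ I atomB = w1 V) :=
  Iff.rfl

lemma assign2_iff (I : ↥At12 → V) : assign2 V I ↔ (I atomB = vrb V ∧ I atomA = w2 V) :=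
  Iff.rfl

end VDefs

section HomFacts

open OrderDual

variable (V : Type) [CompletelyDistribLattice V] [CausalOps L12 V] [IsValueAlgebra L12 V]

lemma exists_hom3 : ∃ h : V → WSet L12,
    (∀ t u : V, t ≤ u → h t ≤ h u) ∧ h ⊥ = ⊥ ∧
    (∀ t u : V, h (capp L12 t u) = capp L12 (h t) (h u)) ∧
    (∀ l : L12, h (clabel L12 V l) = clabel L12 (WSet L12) l) := by
  obtain ⟨h, hh, -⟩ := IsValueAlgebra.free (Lb := L12) (V := V) (WSet L12) (wAlg L12)
  obtain ⟨hsup, hinf, hcapp, hlab⟩ := hh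
  refine ⟨h, ?_, ?_, hcapp, hlab⟩
  · intro t u hle
    have h2 := hsup {t, u}
    rw [sSup_pair, sup_eq_right.mpr hle, Set.image_pair, sSup_pair] at h2
    exact le_sup_left.trans h2.ge
  · simpa using hsup ∅

lemma key_facts :
    vra V ≠ ⊥ ∧ vrb V ≠ ⊥ ∧ w1 V ≠ ⊥ ∧ w2 V ≠ ⊥ ∧
    ¬ vrb V ≤ w1 V ∧ ¬ vra V ≤ w2 V ∧ vra V ≠ w2 V := by
  obtain ⟨h, hmono, hbot, hcapp, hlab⟩ := exists_hom3 V
  have hva : h (vra V) = toDual ({L12.r1} ∪ {L12.a} : Set L12) := by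
    simp [vra, hcapp, hlab, wcapp, wlabel]
  have hvb : h (vrb V) = toDual ({L12.r1} ∪ {L12.b} : Set L12) := by
    simp [vrb, hcapp, hlab, wcapp, wlabel]
  have hw1 : h (w1 V) = toDual ((({L12.r1} ∪ {L12.a}) ∪ {L12.r3}) ∪ {L12.b} : Set L12) := by
    simp [w1, vra, hcapp, hlab, wcapp, wlabel]
  have hw2 : h (w2 V) = toDual ((({L12.r1} ∪ {L12.b}) ∪ {L12.r2}) ∪ {L12.a} : Set L12) := by
    simp [w2, vrb, hcapp, hlab, wcapp, wlabel]
  refine ⟨?_, ?_, ?_, ?_, ?_, ?_, ?_⟩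
  · intro e
    have h2 : toDual ({L12.r1} ∪ {L12.a} : Set L12) = toDual (Set.univ : Set L12) := by
      rw [← hva, e, hbot, wbot]
    have h3 := toDual.injective h2
    have : L12.b ∈ ({L12.r1} ∪ {L12.a} : Set L12) := h3 ▸ Set.mem_univ _
    simp at this
  · intro e
    have h2 : toDual ({L12.r1} ∪ {L12.b} : Set L12) = toDual (Set.univ : Set L12) := by
      rw [← hvb, e, hbot, wbot]
    have h3 := toDual.injective h2
    have : L12.a ∈ ({L12.r1} ∪ {L12.b} : Set L12) := h3 ▸ Set.mem_univ _
    simp at this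
  · intro e
    have h2 : toDual ((({L12.r1} ∪ {L12.a}) ∪ {L12.r3}) ∪ {L12.b} : Set L12)
        = toDual (Set.univ : Set L12) := by rw [← hw1, e, hbot, wbot]
    have h3 := toDual.injective h2
    have : L12.r2 ∈ ((({L12.r1} ∪ {L12.a}) ∪ {L12.r3}) ∪ {L12.b} : Set L12) :=
      h3 ▸ Set.mem_univ _
    simp at this
  · intro e
    have h2 : toDual ((({L12.r1} ∪ {L12.b}) ∪ {L12.r2}) ∪ {L12.a} : Set L12)
        = toDual (Set.univ : Set L12) := by rw [← hw2, e, hbot, wbot]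
    have h3 := toDual.injective h2
    have : L12.r3 ∈ ((({L12.r1} ∪ {L12.b}) ∪ {L12.r2}) ∪ {L12.a} : Set L12) :=
      h3 ▸ Set.mem_univ _
    simp at this
  · intro hle
    have h2 := hmono _ _ hle
    rw [hvb, hw1, toDual_le_toDual] at h2
    have := h2 (show L12.a ∈ _ by simp)
    simp at this
  · intro hle
    have h2 := hmono _ _ hle
    rw [hva, hw2, toDual_le_toDual] at h2
    have := h2 (show L12.b ∈ _ by simp)
    simp at this
  · intro e
    have h2 := congrArg h e
    rw [hva, hw2] at h2
    have h3 := toDual.injective h2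
    have : L12.b ∈ ({L12.r1} ∪ {L12.a} : Set L12) := by rw [h3]; simp
    simp at this

end HomFacts
set_option linter.unusedSectionVars false

section RuleFacts

lemma atom_cases (x : ↥At12) : x = atomA ∨ x = atomB := by
  obtain ⟨v, hv⟩ := x
  cases v with
  | a => exact Or.inl rfl
  | b => exact Or.inr rfl
  | r1 => simp [At12] at hv
  | r2 => simp [At12] at hv
  | r3 => simp [At12] at hv

lemma atomB_ne_atomA : atomB ≠ atomA := by
  simp [atomA, atomB, Subtype.ext_iff]

lemma hposA1 : rule1.hposA = ({atomA, atomB} : Set ↥At12) := by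
  ext ⟨v, hv⟩
  simp [LRule.hposA, rule1, atomA, atomB, Subtype.ext_iff]

lemma hnegA1 : rule1.hnegA = (∅ : Set ↥At12) := by
  ext x; simp [LRule.hnegA, rule1]

lemma bposA1 : rule1.bposA = (∅ : Set ↥At12) := by
  ext x; simp [LRule.bposA, rule1]

lemma bnegA1 : rule1.bnegA = (∅ : Set ↥At12) := by
  ext x; simp [LRule.bnegA, rule1]

lemma hposA2 : rule2.hposA = ({atomA} : Set ↥At12) := by
  ext ⟨v, hv⟩
  simp [LRule.hposA, rule2, atomA, Subtype.ext_iff]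

lemma hnegA2 : rule2.hnegA = (∅ : Set ↥At12) := by
  ext x; simp [LRule.hnegA, rule2]

lemma bposA2 : rule2.bposA = ({atomB} : Set ↥At12) := by
  ext ⟨v, hv⟩
  simp [LRule.bposA, rule2, atomB, Subtype.ext_iff]

lemma bnegA2 : rule2.bnegA = (∅ : Set ↥At12) := by
  ext x; simp [LRule.bnegA, rule2]

lemma hposA3 : rule3.hposA = ({atomB} : Set ↥At12) := by
  ext ⟨v, hv⟩
  simp [LRule.hposA, rule3, atomB, Subtype.ext_iff]

lemma hnegA3 : rule3.hnegA = (∅ : Set ↥At12) := by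
  ext x; simp [LRule.hnegA, rule3]

lemma bposA3 : rule3.bposA = ({atomA} : Set ↥At12) := by
  ext ⟨v, hv⟩
  simp [LRule.bposA, rule3, atomA, Subtype.ext_iff]

lemma bnegA3 : rule3.bnegA = (∅ : Set ↥At12) := by
  ext x; simp [LRule.bnegA, rule3]

end RuleFacts

section SatFacts

variable {V : Type} [CompletelyDistribLattice V] [CausalOps L12 V] [CausalAlgebra L12 V]

lemma bodyVal1 (I : ↥At12 → V) : bodyVal I rule1 = ⊤ := by
  rw [bodyVal, bposA1, bnegA1]; simp

lemma bodyVal2 (I : ↥At12 → V) : bodyVal I rule2 = I atomB := by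
  rw [bodyVal, bposA2, bnegA2]; simp

lemma bodyVal3 (I : ↥At12 → V) : bodyVal I rule3 = I atomA := by
  rw [bodyVal, bposA3, bnegA3]; simp

lemma sat1_iff (I : ↥At12 → V) :
    Satisfies I rule1 ↔ (vra V ≤ I atomA ∨ vrb V ≤ I atomB) := by
  rw [Satisfies, bodyVal1, hposA1, hnegA1, CausalAlgebra.top_capp]
  simp [vra, vrb, atomA, atomB, rule1]

lemma sat2_iff (I : ↥At12 → V) :
    Satisfies I rule2 ↔
      capp L12 (capp L12 (I atomB) (clabel L12 V L12.r2)) (clabel L12 V L12.a) ≤ I atomA := by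
  rw [Satisfies, bodyVal2, hposA2, hnegA2]
  simp [atomA, rule2]

lemma sat3_iff (I : ↥At12 → V) :
    Satisfies I rule3 ↔
      capp L12 (capp L12 (I atomA) (clabel L12 V L12.r3)) (clabel L12 V L12.b) ≤ I atomB := by
  rw [Satisfies, bodyVal3, hposA3, hnegA3]
  simp [atomB, rule3]

lemma models_iff (I : ↥At12 → V) :
    Models I P12 ↔ Satisfies I rule1 ∧ Satisfies I rule2 ∧ Satisfies I rule3 := by
  constructor
  · intro h
    exact ⟨h rule1 (by simp [P12]), h rule2 (by simp [P12]), h rule3 (by simp [P12])⟩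
  · rintro ⟨h1, h2, h3⟩ r hr
    simp only [P12, Set.mem_insert_iff, Set.mem_singleton_iff] at hr
    rcases hr with rfl | rfl | rfl <;> assumption

end SatFacts
section ModelFacts

variable {V : Type} [CompletelyDistribLattice V] [CausalOps L12 V] [IsValueAlgebra L12 V]

lemma w1_le_vra : w1 V ≤ vra V :=
  le_trans (capp_le_left _ _) (capp_le_left _ _)

lemma w2_le_vrb : w2 V ≤ vrb V :=
  le_trans (capp_le_left _ _) (capp_le_left _ _)

lemma models_of_assign1 (I : ↥At12 → V) (hI : assign1 V I) : Models I P12 := by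
  obtain ⟨ha, hb⟩ := (assign1_iff V I).mp hI
  rw [models_iff]
  refine ⟨(sat1_iff I).mpr (Or.inl (le_of_eq ha.symm)), ?_, ?_⟩
  · rw [sat2_iff, ha, hb]
    exact le_trans (capp_le_left _ _) (le_trans (capp_le_left _ _) (w1_le_vra))
  · rw [sat3_iff, ha, hb]
    exact le_refl _

lemma models_of_assign2 (I : ↥At12 → V) (hI : assign2 V I) : Models I P12 := by
  obtain ⟨hb, ha⟩ := (assign2_iff V I).mp hI
  rw [models_iff]
  refine ⟨(sat1_iff I).mpr (Or.inr (le_of_eq hb.symm)), ?_, ?_⟩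
  · rw [sat2_iff, ha, hb]
    exact le_refl _
  · rw [sat3_iff, ha, hb]
    exact le_trans (capp_le_left _ _) (le_trans (capp_le_left _ _) (w2_le_vrb))

lemma minimal_of_assign1 (I : ↥At12 → V) (hI : assign1 V I) :
    ∀ J : ↥At12 → V, Models J P12 → iwle J I → J = I := by
  obtain ⟨ha, hb⟩ := (assign1_iff V I).mp hI
  intro J hJ hle
  obtain ⟨hvra0, hvrb0, hw10, hw20, hnb1, -, -⟩ := key_facts V
  rw [models_iff] at hJ
  obtain ⟨s1, s2, s3⟩ := hJ
  rw [sat1_iff] at s1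
  rw [sat2_iff] at s2
  rw [sat3_iff] at s3
  have hJb : J atomB ≠ ⊥ := by
    intro e
    rcases s1 with h | h
    · have h2 : w1 V ≤ J atomB :=
        le_trans (capp_mono_left (capp_mono_left h _) _) s3
      rw [e, le_bot_iff] at h2
      exact hw10 h2
    · rw [e, le_bot_iff] at h
      exact hvrb0 h
  have hJa : J atomA ≠ ⊥ := by
    intro e
    rcases s1 with h | h
    · rw [e, le_bot_iff] at h
      exact hvra0 h
    · have h2 : w2 V ≤ J atomA :=
        le_trans (capp_mono_left (capp_mono_left h _) _) s2
      rw [e, le_bot_iff] at h2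
      exact hw20 h2
  rcases hle with hle | hss
  · rcases s1 with h | h
    · have ea : J atomA = I atomA := le_antisymm (hle atomA) (ha ▸ h)
      have eb : J atomB = I atomB := by
        refine le_antisymm (hle atomB) ?_
        rw [hb]
        have h3 : w1 V ≤ capp L12 (capp L12 (J atomA) (clabel L12 V L12.r3)) (clabel L12 V L12.b) :=
          capp_mono_left (capp_mono_left h _) _
        exact h3.trans s3
      funext x
      rcases atom_cases x with rfl | rfl
      · exact ea
      · exact eb
    · exfalso
      have h2 : vrb V ≤ w1 V := le_trans h (hb ▸ hle atomB)
      exact hnb1 h2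
  · exfalso
    refine hss.2 fun x hx => ?_
    rcases atom_cases x with rfl | rfl
    · exact hJa
    · exact hJb

end ModelFacts
section ModelFacts2

variable {V : Type} [CompletelyDistribLattice V] [CausalOps L12 V] [IsValueAlgebra L12 V]

lemma minimal_of_assign2 (I : ↥At12 → V) (hI : assign2 V I) :
    ∀ J : ↥At12 → V, Models J P12 → iwle J I → J = I := by
  obtain ⟨hb, ha⟩ := (assign2_iff V I).mp hI
  intro J hJ hle
  obtain ⟨hvra0, hvrb0, hw10, hw20, -, hna2, -⟩ := key_facts V
  rw [models_iff] at hJ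
  obtain ⟨s1, s2, s3⟩ := hJ
  rw [sat1_iff] at s1
  rw [sat2_iff] at s2
  rw [sat3_iff] at s3
  have hJb : J atomB ≠ ⊥ := by
    intro e
    rcases s1 with h | h
    · have h2 : w1 V ≤ J atomB :=
        le_trans (capp_mono_left (capp_mono_left h _) _) s3
      rw [e, le_bot_iff] at h2
      exact hw10 h2
    · rw [e, le_bot_iff] at h
      exact hvrb0 h
  have hJa : J atomA ≠ ⊥ := by
    intro e
    rcases s1 with h | h
    · rw [e, le_bot_iff] at h
      exact hvra0 h
    · have h2 : w2 V ≤ J atomA :=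
        le_trans (capp_mono_left (capp_mono_left h _) _) s2
      rw [e, le_bot_iff] at h2
      exact hw20 h2
  rcases hle with hle | hss
  · rcases s1 with h | h
    · exfalso
      have h2 : vra V ≤ w2 V := le_trans h ((hle atomA).trans_eq ha)
      exact hna2 h2
    · have eb : J atomB = I atomB := le_antisymm (hle atomB) ((le_of_eq hb).trans h)
      have ea : J atomA = I atomA := by
        refine le_antisymm (hle atomA) ?_
        rw [ha]
        have h3 : w2 V ≤ capp L12 (capp L12 (J atomB) (clabel L12 V L12.r2)) (clabel L12 V L12.a) :=
          capp_mono_left (capp_mono_left h _) _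
        exact h3.trans s2
      funext x
      rcases atom_cases x with rfl | rfl
      · exact ea
      · exact eb
  · exfalso
    refine hss.2 fun x hx => ?_
    rcases atom_cases x with rfl | rfl
    · exact hJa
    · exact hJb

lemma atomA_ne_atomB : atomA ≠ atomB := Ne.symm atomB_ne_atomA

lemma csm_forward (I : ↥At12 → V) (hI : CausalStablePos P12 I) :
    assign1 V I ∨ assign2 V I := by
  obtain ⟨hM, hmin⟩ := hI
  obtain ⟨s1, s2, s3⟩ := (models_iff I).mp hM
  rw [sat1_iff] at s1
  rw [sat2_iff] at s2
  rw [sat3_iff] at s3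
  rcases s1 with h | h
  · left
    set J : ↥At12 → V := fun x => if x = atomA then vra V else w1 V with hJdef
    have hJ1 : assign1 V J := by
      rw [assign1_iff]
      refine ⟨by simp [hJdef], by simp [hJdef, atomB_ne_atomA]⟩
    have hJle : ile J I := by
      intro x
      rcases atom_cases x with rfl | rfl
      · simpa [hJdef] using h
      · have h3 : w1 V ≤ I atomB := le_trans (capp_mono_left (capp_mono_left h _) _) s3
        simpa [hJdef, atomB_ne_atomA] using h3
    have hEq := hmin J (models_of_assign1 J hJ1) (Or.inl hJle)
    rw [← hEq]
    exact hJ1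
  · right
    set J : ↥At12 → V := fun x => if x = atomB then vrb V else w2 V with hJdef
    have hJ2 : assign2 V J := by
      rw [assign2_iff]
      refine ⟨by simp [hJdef], by simp [hJdef, atomA_ne_atomB]⟩
    have hJle : ile J I := by
      intro x
      rcases atom_cases x with rfl | rfl
      · have h3 : w2 V ≤ I atomA := le_trans (capp_mono_left (capp_mono_left h _) _) s2
        simpa [hJdef, atomA_ne_atomB] using h3
      · simpa [hJdef] using h
    have hEq := hmin J (models_of_assign2 J hJ2) (Or.inl hJle)
    rw [← hEq]
    exact hJ2

end ModelFacts2

section GLFacts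

lemma P12_bnegA {r : LRule L12 At12} (hr : r ∈ P12) : r.bnegA = (∅ : Set ↥At12) := by
  simp only [P12, Set.mem_insert_iff, Set.mem_singleton_iff] at hr
  rcases hr with rfl | rfl | rfl
  · exact bnegA1
  · exact bnegA2
  · exact bnegA3

lemma P12_hnegA {r : LRule L12 At12} (hr : r ∈ P12) : r.hnegA = (∅ : Set ↥At12) := by
  simp only [P12, Set.mem_insert_iff, Set.mem_singleton_iff] at hr
  rcases hr with rfl | rfl | rfl
  · exact hnegA1
  · exact hnegA2
  · exact hnegA3

lemma P12_strip {r : LRule L12 At12} (hr : r ∈ P12) : r.strip = r := by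
  simp only [P12, Set.mem_insert_iff, Set.mem_singleton_iff] at hr
  rcases hr with rfl | rfl | rfl <;> rfl

lemma glred (S : Set ↥At12) : glReduct P12 S = P12 := by
  ext r
  simp only [glReduct, Set.mem_setOf_eq]
  constructor
  · rintro ⟨r', hr', -, -, rfl⟩
    rw [P12_strip hr']
    exact hr'
  · intro hr
    exact ⟨r, hr, by rw [P12_bnegA hr]; simp, by rw [P12_hnegA hr]; simp,
      (P12_strip hr).symm⟩

lemma closed_pair : ClosedUnder P12 ({atomA, atomB} : Set ↥At12) := by
  intro r hr _ _
  simp only [P12, Set.mem_insert_iff, Set.mem_singleton_iff] at hr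
  rcases hr with rfl | rfl | rfl
  · exact ⟨atomA, by rw [hposA1]; simp, by simp⟩
  · exact ⟨atomA, by rw [hposA2]; simp, by simp⟩
  · exact ⟨atomB, by rw [hposA3]; simp, by simp⟩

lemma closed_eq (S : Set ↥At12) (h : ClosedUnder P12 S) : S = {atomA, atomB} := by
  have stepAB : atomA ∈ S → atomB ∈ S := by
    intro hA
    have h3 := h rule3 (by simp [P12]) (by rw [bposA3, hnegA3]; simpa using hA)
      (by rw [bnegA3]; simp)
    rw [hposA3] at h3
    obtain ⟨y, hy, hyS⟩ := h3
    simp only [Set.mem_singleton_iff] at hy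
    exact hy ▸ hyS
  have stepBA : atomB ∈ S → atomA ∈ S := by
    intro hB
    have h2 := h rule2 (by simp [P12]) (by rw [bposA2, hnegA2]; simpa using hB)
      (by rw [bnegA2]; simp)
    rw [hposA2] at h2
    obtain ⟨y, hy, hyS⟩ := h2
    simp only [Set.mem_singleton_iff] at hy
    exact hy ▸ hyS
  have h1 := h rule1 (by simp [P12]) (by rw [bposA1, hnegA1]; simp) (by rw [bnegA1]; simp)
  rw [hposA1] at h1
  have hboth : atomA ∈ S ∧ atomB ∈ S := by
    obtain ⟨x, hx, hxS⟩ := h1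
    simp only [Set.mem_insert_iff, Set.mem_singleton_iff] at hx
    rcases hx with rfl | rfl
    · exact ⟨hxS, stepAB hxS⟩
    · exact ⟨stepBA hxS, hxS⟩
  ext x
  constructor
  · intro _
    rcases atom_cases x with rfl | rfl <;> simp
  · intro hx
    simp only [Set.mem_insert_iff, Set.mem_singleton_iff] at hx
    rcases hx with rfl | rfl
    · exact hboth.1
    · exact hboth.2

lemma gl_iff (S : Set ↥At12) : GLStable P12 S ↔ S = ({atomA, atomB} : Set ↥At12) := by
  simp only [GLStable, glred]
  constructor
  · rintro ⟨h1, -⟩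
    exact closed_eq S h1
  · rintro rfl
    exact ⟨closed_pair, fun S' _ hcl => closed_eq S' hcl⟩

end GLFacts
/-- The program `P = {r1 : a ∨ b ←, r2 : a ← b, r3 : b ← a}` has exactly two causal stable
models `I` and `I'`, given by `I(a) = r1·a`, `I(b) = (r1·a)·r3·b` and `I'(b) = r1·b`,
`I'(a) = (r1·b)·r2·a` (and these are distinct); in particular
`Atoms(I) = Atoms(I') = {a, b}`, which is the unique GL-stable model of `P`. -/
theorem program7_two_causal_stable_models (V : Type)
    [CompletelyDistribLattice V] [CausalOps L12 V] [IsValueAlgebra L12 V] :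
    (∀ I : ↥At12 → V, CausalStablePos P12 I ↔ (assign1 V I ∨ assign2 V I)) ∧
    (¬∃ I : ↥At12 → V, assign1 V I ∧ assign2 V I) ∧
    (∀ I : ↥At12 → V, assign1 V I ∨ assign2 V I →
      AtomsOf I = ({atomA, atomB} : Set ↥At12)) ∧
    (∀ S : Set ↥At12, GLStable P12 S ↔ S = ({atomA, atomB} : Set ↥At12)) := by
  refine ⟨?_, ?_, ?_, ?_⟩
  · intro I
    constructor
    · exact csm_forward I
    · rintro (h | h)
      · exact ⟨models_of_assign1 I h, minimal_of_assign1 I h⟩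
      · exact ⟨models_of_assign2 I h, minimal_of_assign2 I h⟩
  · rintro ⟨I, h1, h2⟩
    obtain ⟨-, -, -, -, -, -, hne⟩ := key_facts V
    exact hne (((assign1_iff V I).mp h1).1.symm.trans ((assign2_iff V I).mp h2).2)
  · intro I hI
    obtain ⟨hvra0, hvrb0, hw10, hw20, -, -, -⟩ := key_facts V
    have hA : I atomA ≠ ⊥ ∧ I atomB ≠ ⊥ := by
      rcases hI with h | h
      · obtain ⟨ha, hb⟩ := (assign1_iff V I).mp h
        exact ⟨by rw [ha]; exact hvra0, by rw [hb]; exact hw10⟩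
      · obtain ⟨hb, ha⟩ := (assign2_iff V I).mp h
        exact ⟨by rw [ha]; exact hw20, by rw [hb]; exact hvrb0⟩
    ext x
    simp only [AtomsOf, Set.mem_setOf_eq, Set.mem_insert_iff, Set.mem_singleton_iff]
    constructor
    · intro _
      exact atom_cases x
    · rintro (rfl | rfl)
      · exact hA.1
      · exact hA.2
  · exact gl_iff

end Causal
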